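/- Let h > 0 and let v, w ∈ ℝ³ be linearly independent, and suppose the numerical wall W_w(v) is the semicircle {(α, β) : α > 0 and α² + (β − s)² = ρ²} for some s ∈ ℝ and ρ > 0. Then Re Z_{ρ,s}(v) = 0; that is, the curve Re Z_{α,β}(v) = 0 passes through the top point (α, β) = (ρ, s) of the semicircular wall. If moreover v ≠ 0 and Δ̄(v) ≥ 0, then (ρ, s) is the unique point (α, β) of W_w(v) at which Re Z_{α,β}(v) = 0. -/
import Mathlib


namespace BridgelandNotes

/-- The central charge `Z_{α,β}(v)` for `v = (r, c, d)`, where `h` plays the role of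
`H²`:  `Z_{α,β}(v) = (−d + β·c + ((α² − β²)/2)·h·r) + i·α·(c − β·h·r)`. -/
noncomputable def centralCharge (h : ℝ) (v : ℝ × ℝ × ℝ) (α β : ℝ) : ℂ :=
  ⟨-v.2.2 + β * v.2.1 + ((α ^ 2 - β ^ 2) / 2) * h * v.1,
    α * (v.2.1 - β * h * v.1)⟩

/-- The numerical wall `W_w(v)` in the `(α, β)`-plane:
`{(α, β) : α > 0 and Re Z_{α,β}(v)·Im Z_{α,β}(w) = Re Z_{α,β}(w)·Im Z_{α,β}(v)}`. -/
noncomputable def numericalWall (h : ℝ) (v w : ℝ × ℝ × ℝ) : Set (ℝ × ℝ) :=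
  {p : ℝ × ℝ | 0 < p.1 ∧
    (centralCharge h v p.1 p.2).re * (centralCharge h w p.1 p.2).im =
      (centralCharge h w p.1 p.2).re * (centralCharge h v p.1 p.2).im}

/-- The discriminant `Δ̄(v) = c² − 2·h·r·d` for `v = (r, c, d)`. -/
def disc (h : ℝ) (v : ℝ × ℝ × ℝ) : ℝ := v.2.1 ^ 2 - 2 * h * v.1 * v.2.2

/-- The curve `Re Z_{α,β}(v) = 0` passes through the top point `(ρ, s)` of every
semicircular numerical wall for `v`; if moreover `v ≠ 0` and `Δ̄(v) ≥ 0`, then the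
top point is the unique point of the wall where `Re Z_{α,β}(v)` vanishes. -/
theorem re_centralCharge_vanishes_at_top (h : ℝ) (hh : 0 < h)
    (v w : ℝ × ℝ × ℝ) (hvw : LinearIndependent ℝ ![v, w]) (s ρ : ℝ) (hρ : 0 < ρ)
    (hW : numericalWall h v w =
      {p : ℝ × ℝ | 0 < p.1 ∧ p.1 ^ 2 + (p.2 - s) ^ 2 = ρ ^ 2}) :
    (centralCharge h v ρ s).re = 0 ∧
      (v ≠ 0 → 0 ≤ disc h v →
        ∀ p ∈ numericalWall h v w, (centralCharge h v p.1 p.2).re = 0 → p = (ρ, s)) := by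
  obtain ⟨r, c, d⟩ := v
  obtain ⟨r', c', d'⟩ := w
  rw [Set.ext_iff] at hW
  simp only [numericalWall, centralCharge, Set.mem_setOf_eq] at hW
  -- abbreviations for the wall quadric coefficients
  -- K = h(rc'-r'c)/2, B = h(dr'-d'r), C = d'c-dc'
  -- key: points of the semicircle satisfy the quadric
  have key : ∀ α β : ℝ, 0 < α → α ^ 2 + (β - s) ^ 2 = ρ ^ 2 →
      (h * (r * c' - r' * c) / 2) * (α ^ 2 + β ^ 2) + (h * (d * r' - d' * r)) * β
        + (d' * c - d * c') = 0 := by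
    intro α β hα hcirc
    obtain ⟨-, heq⟩ := (hW (α, β)).mpr ⟨hα, hcirc⟩
    have hmul : α * ((h * (r * c' - r' * c) / 2) * (α ^ 2 + β ^ 2)
        + (h * (d * r' - d' * r)) * β + (d' * c - d * c')) = 0 := by
      linear_combination heq
    exact (mul_eq_zero.mp hmul).resolve_left (ne_of_gt hα)
  have e1 := key ρ s hρ (by ring)
  have e2 := key (4 * ρ / 5) (s + 3 * ρ / 5) (by linarith) (by ring)
  have e3 := key (4 * ρ / 5) (s - 3 * ρ / 5) (by linarith) (by ring)
  have hB : h * (d * r' - d' * r) + 2 * (h * (r * c' - r' * c) / 2) * s = 0 := by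
    have h6 : (6 * ρ / 5) * (h * (d * r' - d' * r)
        + 2 * (h * (r * c' - r' * c) / 2) * s) = 0 := by linear_combination e2 - e3
    have : (6 * ρ / 5) ≠ 0 := by positivity
    exact (mul_eq_zero.mp h6).resolve_left this
  have hC : (d' * c - d * c') = (h * (r * c' - r' * c) / 2) * (s ^ 2 - ρ ^ 2) := by
    linear_combination e1 - s * hB
  have hK : h * (r * c' - r' * c) / 2 ≠ 0 := by
    intro hK0
    have hB0 : h * (d * r' - d' * r) = 0 := by linear_combination hB - 2 * s * hK0
    have hC0 : (d' * c - d * c') = 0 := by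
      rw [hC, hK0]; ring
    have hpos : (0 : ℝ) < (((2 * ρ, s) : ℝ × ℝ)).1 := by simp; linarith
    have heq2 : (-d + ((2 * ρ, s) : ℝ × ℝ).2 * c +
          ((((2 * ρ, s) : ℝ × ℝ).1) ^ 2 - (((2 * ρ, s) : ℝ × ℝ).2) ^ 2) / 2 * h * r) *
          ((((2 * ρ, s) : ℝ × ℝ).1) * (c' - (((2 * ρ, s) : ℝ × ℝ).2) * h * r')) =
        (-d' + ((2 * ρ, s) : ℝ × ℝ).2 * c' +
          ((((2 * ρ, s) : ℝ × ℝ).1) ^ 2 - (((2 * ρ, s) : ℝ × ℝ).2) ^ 2) / 2 * h * r') *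
          ((((2 * ρ, s) : ℝ × ℝ).1) * (c - (((2 * ρ, s) : ℝ × ℝ).2) * h * r)) := by
      simp only
      linear_combination (2 * ρ) * ((2 * ρ) ^ 2 + s ^ 2) * hK0 + (2 * ρ) * s * hB0
        + (2 * ρ) * hC0
    have hmem := (hW (2 * ρ, s)).mp ⟨hpos, heq2⟩
    have h4 : (2 * ρ) ^ 2 + (s - s) ^ 2 = ρ ^ 2 := hmem.2
    nlinarith
  -- first claim
  have h1 : (centralCharge h (r, c, d) ρ s).re = 0 := by
    have hKRe : (h * (r * c' - r' * c) / 2) *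
        (-d + s * c + ((ρ ^ 2 - s ^ 2) / 2) * h * r) = 0 := by
      linear_combination ((c : ℝ) / 2) * hB + (h * r / 2) * hC
    have := (mul_eq_zero.mp hKRe).resolve_left hK
    simpa [centralCharge] using this
  refine ⟨h1, ?_⟩
  intro hv hΔ p hp hre
  obtain ⟨α, β⟩ := p
  obtain ⟨hα, hcirc⟩ := (hW (α, β)).mp (by simpa [numericalWall, centralCharge] using hp)
  clear hW key e1 e2 e3 hp hvw
  simp only [centralCharge] at hre h1
  have hfac : (β - s) * (c - β * (h * r)) = 0 := by
    linear_combination hre - h1 - (h * r / 2) * hcirc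
  rcases mul_eq_zero.mp hfac with hβ | hc
  · have hβs : β = s := by linarith
    have hαρ : α = ρ := by nlinarith [hcirc, hβs]
    simp [hαρ, hβs]
  · by_cases hr : r = 0
    · have hc0 : c = 0 := by linear_combination hc + β * h * hr
      have hd0 : d = 0 := by
        linear_combination (-1 : ℝ) * h1 + s * hc0 + ((ρ ^ 2 - s ^ 2) / 2 * h) * hr
      exact absurd (show ((r, c, d) : ℝ × ℝ × ℝ) = 0 by rw [hr, hc0, hd0]; rfl) hv
    · exfalso
      simp only [disc] at hΔ
      have hD2 : (c - h * r * s) ^ 2 - (h * r) ^ 2 * ρ ^ 2 = c ^ 2 - 2 * h * r * d := by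
        linear_combination (-2 * h * r) * h1
      have hhr : (0 : ℝ) < (h * r) ^ 2 := by
        have : h * r ≠ 0 := mul_ne_zero (ne_of_gt hh) hr
        positivity
      have hsq : (h * r) ^ 2 * (β - s) ^ 2 = (c - h * r * s) ^ 2 := by
        linear_combination (-(c + h * r * β - 2 * h * r * s)) * hc
      have hge : (β - s) ^ 2 ≥ ρ ^ 2 := by
        have : (h * r) ^ 2 * (β - s) ^ 2 ≥ (h * r) ^ 2 * ρ ^ 2 := by linarith
        exact le_of_mul_le_mul_left this hhr
      nlinarith [hcirc, hα, hge]

end BridgelandNotes
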